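/- Let Γ = (V,E) be a finite graph and let f : V → ℝ be a nonzero function. Then there exists a non-empty subset S ⊆ supp(f) such that 4·Ray_Γ(f) ≥ (√(|δS|/|S| + 1) − 1)^2, where Ray_Γ(f) = (Σ_{(u,v)∈E} |f(u) − f(v)|^2) / (Σ_{v∈V} |f(v)|^2) is the (nonnormalized) Rayleigh quotient, the first sum being over the edges of Γ (each edge counted once). -/

import Mathlib

open scoped Pointwise

namespace Multiway

variable {V : Type*}

/-- The edge boundary `∂A`: the set of edges with one endpoint in `A` and the other in `Vᶜ∖A`. -/
def edgeBdry (G : SimpleGraph V) (A : Set V) : Set (Sym2 V) :=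
  {e | e ∈ G.edgeSet ∧ ∃ u v, e = s(u, v) ∧ u ∈ A ∧ v ∉ A}

/-- The symmetric vertex boundary `δA`: vertices incident to an edge crossing `A`. -/
def vertBdry (G : SimpleGraph V) (A : Set V) : Set V :=
  {x | ∃ y, G.Adj x y ∧ ¬ (x ∈ A ↔ y ∈ A)}

/-- A partition of the vertex set into `n` non-empty pairwise disjoint sets. -/
def IsNPartition (n : ℕ) (A : Fin n → Set V) : Prop :=
  (∀ i, (A i).Nonempty) ∧ (∀ i j, i ≠ j → Disjoint (A i) (A j)) ∧ (⋃ i, A i) = Set.univ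

/-- `max_i |∂A_i| / |A_i|`. -/
noncomputable def edgeRatioMax (G : SimpleGraph V) {n : ℕ} (A : Fin n → Set V) : ℝ :=
  ⨆ i, ((edgeBdry G (A i)).ncard : ℝ) / ((A i).ncard : ℝ)

/-- `max_i |δA_i| / |A_i|`. -/
noncomputable def vertRatioMax (G : SimpleGraph V) {n : ℕ} (A : Fin n → Set V) : ℝ :=
  ⨆ i, ((vertBdry G (A i)).ncard : ℝ) / ((A i).ncard : ℝ)

/-- The `n`-way isoperimetric constant `h_n(Γ)`. -/
noncomputable def multiH (G : SimpleGraph V) (n : ℕ) : ℝ :=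
  sInf {r | ∃ A : Fin n → Set V, IsNPartition n A ∧ r = edgeRatioMax G A}

/-- The `n`-way symmetric vertex isoperimetric constant `ι_n(Γ)`. -/
noncomputable def multiIota (G : SimpleGraph V) (n : ℕ) : ℝ :=
  sInf {r | ∃ A : Fin n → Set V, IsNPartition n A ∧ r = vertRatioMax G A}

/-- A graph is vertex-transitive if its automorphism group acts transitively on vertices. -/
def VertexTransitive (G : SimpleGraph V) : Prop :=
  ∀ u v : V, ∃ φ : G ≃g G, φ u = v


open Finset MeasureTheory Set

namespace MultiwayAux

variable [Fintype V] [DecidableEq V] (G : SimpleGraph V) [DecidableRel G.Adj]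

lemma nbhd_ne (x : V) : (insert x (G.neighborFinset x)).Nonempty :=
  ⟨x, Finset.mem_insert_self _ _⟩

noncomputable def Bsup (F : V → ℝ) (x : V) : ℝ :=
  (insert x (G.neighborFinset x)).sup' (nbhd_ne G x) F

noncomputable def binf (F : V → ℝ) (x : V) : ℝ :=
  (insert x (G.neighborFinset x)).inf' (nbhd_ne G x) F

lemma le_Bsup (F : V → ℝ) (x : V) : F x ≤ Bsup G F x :=
  Finset.le_sup' F (Finset.mem_insert_self _ _)

lemma binf_le (F : V → ℝ) (x : V) : binf G F x ≤ F x :=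
  Finset.inf'_le F (Finset.mem_insert_self _ _)

noncomputable def sqDiff (F : V → ℝ) : Sym2 V → ℝ :=
  Sym2.lift ⟨fun u v => (F u - F v) ^ 2, fun a b => by ring⟩

omit [Fintype V] [DecidableEq V] in
lemma sqDiff_mk (F : V → ℝ) (u v : V) : sqDiff F s(u, v) = (F u - F v) ^ 2 := rfl

omit [Fintype V] [DecidableEq V] in
lemma sqDiff_nonneg (F : V → ℝ) (e : Sym2 V) : 0 ≤ sqDiff F e := by
  induction e using Sym2.ind with
  | _ u v => rw [sqDiff_mk]; positivity

lemma sup_energy (F : V → ℝ) :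
    ∑ x, (Bsup G F x - F x) ^ 2 ≤ ∑ e ∈ G.edgeFinset, sqDiff F e := by
  classical
  choose y hy hyeq using fun x => Finset.exists_mem_eq_sup' (nbhd_ne G x) F
  set P : Finset V := univ.filter (fun x => F x < Bsup G F x) with hP
  have hFy : ∀ x, Bsup G F x = F (y x) := fun x => hyeq x
  have hmemP : ∀ x ∈ P, F x < F (y x) := by
    intro x hx
    rw [← hFy]
    exact (Finset.mem_filter.mp hx).2
  have hstep : ∑ x, (Bsup G F x - F x) ^ 2 = ∑ x ∈ P, sqDiff F s(x, y x) := by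
    rw [← Finset.sum_filter_add_sum_filter_not univ (fun x => F x < Bsup G F x)
      (fun x => (Bsup G F x - F x) ^ 2)]
    have h2 : ∑ x ∈ univ.filter (fun x => ¬ F x < Bsup G F x), (Bsup G F x - F x) ^ 2 = 0 := by
      apply Finset.sum_eq_zero
      intro x hx
      have h1 := (Finset.mem_filter.mp hx).2
      have h2 := le_Bsup G F x
      have : Bsup G F x = F x := le_antisymm (not_lt.mp h1) h2
      rw [this]; ring
    rw [h2, add_zero]
    apply Finset.sum_congr rfl
    intro x _
    rw [sqDiff_mk, hFy x]
    ring
  rw [hstep]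
  have hinj : ∀ x ∈ P, ∀ x' ∈ P, s(x, y x) = s(x', y x') → x = x' := by
    intro x hx x' hx' heq
    rw [Sym2.eq_iff] at heq
    rcases heq with ⟨h1, _⟩ | ⟨h1, h2⟩
    · exact h1
    · exfalso
      have ha := hmemP x hx
      have hb := hmemP x' hx'
      rw [← h1] at hb; rw [h2] at ha
      linarith
  rw [← Finset.sum_image hinj]
  apply Finset.sum_le_sum_of_subset_of_nonneg
  · intro e he
    obtain ⟨x, hx, rfl⟩ := Finset.mem_image.mp he
    have hne : y x ≠ x := by
      intro h
      have := hmemP x hx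
      rw [h] at this; exact lt_irrefl _ this
    have : y x ∈ G.neighborFinset x := by
      rcases Finset.mem_insert.mp (hy x) with h | h
      · exact absurd h hne
      · exact h
    rw [SimpleGraph.mem_edgeFinset, SimpleGraph.mem_edgeSet]
    exact (SimpleGraph.mem_neighborFinset G x (y x)).mp this
  · intro e _ _
    exact sqDiff_nonneg F e

lemma Bsup_neg (F : V → ℝ) (x : V) : Bsup G (fun v => -F v) x = - binf G F x := by
  apply le_antisymm
  · apply Finset.sup'_le
    intro z hz
    simp only [neg_le_neg_iff]
    exact Finset.inf'_le F hz
  · obtain ⟨c, hc, hce⟩ := Finset.exists_mem_eq_inf' (nbhd_ne G x) F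
    have h0 : binf G F x = F c := hce
    rw [h0, neg_le]
    show -((insert x (G.neighborFinset x)).sup' (nbhd_ne G x) (fun v => -F v)) ≤ F c
    have h' : -F c ≤ (insert x (G.neighborFinset x)).sup' (nbhd_ne G x) (fun v => -F v) :=
      Finset.le_sup' (fun v => -F v) hc
    linarith

lemma inf_energy (F : V → ℝ) :
    ∑ x, (F x - binf G F x) ^ 2 ≤ ∑ e ∈ G.edgeFinset, sqDiff F e := by
  have h := sup_energy G (fun v => -F v)
  have h1 : ∀ x : V, (Bsup G (fun v => -F v) x - (-F x)) ^ 2 = (F x - binf G F x) ^ 2 := by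
    intro x
    rw [Bsup_neg]
    ring
  have h2 : ∀ e ∈ G.edgeFinset, sqDiff (fun v => -F v) e = sqDiff F e := by
    intro e _
    induction e using Sym2.ind with
    | _ u v => rw [sqDiff_mk, sqDiff_mk]; ring
  calc ∑ x, (F x - binf G F x) ^ 2 = ∑ x, (Bsup G (fun v => -F v) x - (-F x)) ^ 2 := by
        exact Finset.sum_congr rfl (fun x _ => (h1 x).symm)
    _ ≤ ∑ e ∈ G.edgeFinset, sqDiff (fun v => -F v) e := h
    _ = ∑ e ∈ G.edgeFinset, sqDiff F e := Finset.sum_congr rfl h2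


lemma sq_sup (F : V → ℝ) (hF : ∀ v, 0 ≤ F v) (x : V) :
    (insert x (G.neighborFinset x)).sup' (nbhd_ne G x) (fun y => F y ^ 2) = Bsup G F x ^ 2 := by
  apply le_antisymm
  · apply Finset.sup'_le
    intro z hz
    have h1 : F z ≤ Bsup G F x := Finset.le_sup' F hz
    exact pow_le_pow_left₀ (hF z) h1 2
  · obtain ⟨z, hz, hze⟩ := Finset.exists_mem_eq_sup' (nbhd_ne G x) F
    have h0 : Bsup G F x = F z := hze
    rw [h0]
    exact Finset.le_sup' (fun y => F y ^ 2) hz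

lemma sq_inf (F : V → ℝ) (hF : ∀ v, 0 ≤ F v) (x : V) :
    (insert x (G.neighborFinset x)).inf' (nbhd_ne G x) (fun y => F y ^ 2) = binf G F x ^ 2 := by
  apply le_antisymm
  · obtain ⟨z, hz, hze⟩ := Finset.exists_mem_eq_inf' (nbhd_ne G x) F
    have h0 : binf G F x = F z := hze
    rw [h0]
    exact Finset.inf'_le (fun y => F y ^ 2) hz
  · apply Finset.le_inf'
    intro z hz
    have h1 : binf G F x ≤ F z := Finset.inf'_le F hz
    have h2 : 0 ≤ binf G F x := by
      have := hF x
      refine Finset.le_inf' _ _ (fun b hb => hF b)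
    exact pow_le_pow_left₀ h2 h1 2

lemma binf_nonneg (F : V → ℝ) (hF : ∀ v, 0 ≤ F v) (x : V) : 0 ≤ binf G F x :=
  Finset.le_inf' _ _ (fun b _ => hF b)

/-- The core analytic estimate. -/
lemma core (F : V → ℝ) (hF : ∀ v, 0 ≤ F v) :
    ∑ x, (Bsup G F x ^ 2 - binf G F x ^ 2)
      ≤ 4 * Real.sqrt ((∑ v, F v ^ 2) * (∑ e ∈ G.edgeFinset, sqDiff F e))
        + ∑ e ∈ G.edgeFinset, sqDiff F e := by
  classical
  set S : ℝ := ∑ v, F v ^ 2 with hS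
  set E : ℝ := ∑ e ∈ G.edgeFinset, sqDiff F e with hE
  have hSnn : 0 ≤ S := Finset.sum_nonneg (fun v _ => sq_nonneg _)
  have hEnn : 0 ≤ E := Finset.sum_nonneg (fun e _ => sqDiff_nonneg F e)
  set dp : V → ℝ := fun x => Bsup G F x - F x with hdp
  set dm : V → ℝ := fun x => F x - binf G F x with hdm
  have hdpnn : ∀ x, 0 ≤ dp x := fun x => by
    have := le_Bsup G F x; simp [hdp]; linarith
  have hdmnn : ∀ x, 0 ≤ dm x := fun x => by
    have := binf_le G F x; simp [hdm]; linarith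
  have hpt : ∀ x, Bsup G F x ^ 2 - binf G F x ^ 2
      ≤ 2 * (F x * (dp x + dm x)) + dp x ^ 2 := by
    intro x
    have h := sq_nonneg (F x - binf G F x)
    simp only [hdp, hdm]
    nlinarith [h]
  have h1 : ∑ x, (Bsup G F x ^ 2 - binf G F x ^ 2)
      ≤ 2 * (∑ x, F x * (dp x + dm x)) + ∑ x, dp x ^ 2 := by
    rw [Finset.mul_sum]
    rw [← Finset.sum_add_distrib]
    exact Finset.sum_le_sum (fun x _ => hpt x)
  have hdpE : ∑ x, dp x ^ 2 ≤ E := sup_energy G F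
  have hdmE : ∑ x, dm x ^ 2 ≤ E := inf_energy G F
  have hcs : (∑ x, F x * (dp x + dm x)) ^ 2 ≤ S * (4 * E) := by
    have h2 := Finset.sum_mul_sq_le_sq_mul_sq univ F (fun x => dp x + dm x)
    have h3 : ∑ x, (dp x + dm x) ^ 2 ≤ 4 * E := by
      have h4 : ∑ x, (dp x + dm x) ^ 2 ≤ ∑ x, (2 * dp x ^ 2 + 2 * dm x ^ 2) :=
        Finset.sum_le_sum (fun x _ => by nlinarith [sq_nonneg (dp x - dm x)])
      have h5 : ∑ x, (2 * dp x ^ 2 + 2 * dm x ^ 2)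
          = 2 * (∑ x, dp x ^ 2) + 2 * (∑ x, dm x ^ 2) := by
        rw [Finset.sum_add_distrib, Finset.mul_sum, Finset.mul_sum]
      linarith
    calc (∑ x, F x * (dp x + dm x)) ^ 2 ≤ S * ∑ x, (dp x + dm x) ^ 2 := h2
      _ ≤ S * (4 * E) := by
        apply mul_le_mul_of_nonneg_left h3 hSnn
  have hnn : 0 ≤ ∑ x, F x * (dp x + dm x) :=
    Finset.sum_nonneg (fun x _ => mul_nonneg (hF x) (by linarith [hdpnn x, hdmnn x]))
  have hsq : ∑ x, F x * (dp x + dm x) ≤ 2 * Real.sqrt (S * E) := by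
    have h6 : Real.sqrt ((∑ x, F x * (dp x + dm x)) ^ 2) ≤ Real.sqrt (S * (4 * E)) :=
      Real.sqrt_le_sqrt hcs
    rw [Real.sqrt_sq hnn] at h6
    have h7 : Real.sqrt (S * (4 * E)) = 2 * Real.sqrt (S * E) := by
      rw [show S * (4 * E) = 4 * (S * E) by ring, Real.sqrt_mul (by norm_num : (0:ℝ) ≤ 4),
        show Real.sqrt 4 = 2 by
          rw [show (4:ℝ) = 2 ^ 2 by norm_num, Real.sqrt_sq (by norm_num : (0:ℝ) ≤ 2)]]
    linarith [h6, h7.le, h7.ge]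
  calc ∑ x, (Bsup G F x ^ 2 - binf G F x ^ 2)
      ≤ 2 * (∑ x, F x * (dp x + dm x)) + ∑ x, dp x ^ 2 := h1
    _ ≤ 2 * (2 * Real.sqrt (S * E)) + E := by
        have := hdpE
        nlinarith [hsq]
    _ = 4 * Real.sqrt (S * E) + E := by ring


omit [Fintype V] [DecidableEq V] G in
lemma integrable_ind {s : Set ℝ} (hs : MeasurableSet s) (hfin : volume s < ⊤) :
    Integrable (s.indicator (fun _ => (1:ℝ))) := by
  rw [MeasureTheory.integrable_indicator_iff hs]
  exact (MeasureTheory.integrableOn_const_iff (C := (1:ℝ))).mpr (Or.inr hfin)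

omit [Fintype V] [DecidableEq V] G in
lemma int_Ioo (c : ℝ) (hc : 0 ≤ c) :
    ∫ t in Set.Ioi (0:ℝ), (Set.Ioo (0:ℝ) c).indicator (fun _ => (1:ℝ)) t = c := by
  rw [MeasureTheory.setIntegral_indicator measurableSet_Ioo, MeasureTheory.setIntegral_const,
    Set.inter_eq_self_of_subset_right Set.Ioo_subset_Ioi_self, MeasureTheory.measureReal_def, Real.volume_Ioo, smul_eq_mul,
    mul_one, sub_zero, ENNReal.toReal_ofReal hc]

omit [Fintype V] [DecidableEq V] G in
lemma int_Ico (a b : ℝ) (ha : 0 ≤ a) (hab : a ≤ b) :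
    ∫ t in Set.Ioi (0:ℝ), (Set.Ico a b).indicator (fun _ => (1:ℝ)) t = b - a := by
  rw [MeasureTheory.setIntegral_indicator measurableSet_Ico, MeasureTheory.setIntegral_const,
    smul_eq_mul, mul_one]
  have hv : volume (Set.Ioi (0:ℝ) ∩ Set.Ico a b) = ENNReal.ofReal (b - a) := by
    rcases eq_or_lt_of_le ha with h0 | h0
    · have hset : Set.Ioi (0:ℝ) ∩ Set.Ico a b = Set.Ioo 0 b := by
        ext t
        simp only [Set.mem_inter_iff, Set.mem_Ioi, Set.mem_Ico, Set.mem_Ioo, ← h0]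
        constructor
        · rintro ⟨h1, _, h3⟩; exact ⟨h1, h3⟩
        · rintro ⟨h1, h2⟩; exact ⟨h1, le_of_lt h1, h2⟩
      rw [hset, Real.volume_Ioo, ← h0, sub_zero]
    · have hsub : Set.Ico a b ⊆ Set.Ioi (0:ℝ) := fun t ht => lt_of_lt_of_le h0 ht.1
      rw [Set.inter_eq_self_of_subset_right hsub, Real.volume_Ico]
  rw [MeasureTheory.measureReal_def, hv, ENNReal.toReal_ofReal (by linarith)]

lemma mem_interval_iff (F : V → ℝ) (hF : ∀ v, 0 ≤ F v) (x : V) (t : ℝ) :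
    (binf G F x ^ 2 ≤ t ∧ t < Bsup G F x ^ 2) ↔
      ∃ y, G.Adj x y ∧ ¬ (t < F x ^ 2 ↔ t < F y ^ 2) := by
  constructor
  · rintro ⟨h1, h2⟩
    by_cases hx : t < F x ^ 2
    · obtain ⟨z, hz, hze⟩ := Finset.exists_mem_eq_inf' (nbhd_ne G x) (fun y => F y ^ 2)
      have hzval : F z ^ 2 = binf G F x ^ 2 := by rw [← sq_inf G F hF x]; exact hze.symm
      have hzle : F z ^ 2 ≤ t := by rw [hzval]; exact h1
      have hzx : z ≠ x := by rintro rfl; linarith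
      have hadj : G.Adj x z := (SimpleGraph.mem_neighborFinset G x z).mp (by
        rcases Finset.mem_insert.mp hz with h | h
        · exact absurd h hzx
        · exact h)
      exact ⟨z, hadj, by simp [hx, not_lt.mpr hzle]⟩
    · obtain ⟨z, hz, hze⟩ := Finset.exists_mem_eq_sup' (nbhd_ne G x) (fun y => F y ^ 2)
      have hzval : F z ^ 2 = Bsup G F x ^ 2 := by rw [← sq_sup G F hF x]; exact hze.symm
      have hzgt : t < F z ^ 2 := by rw [hzval]; exact h2
      have hzx : z ≠ x := by rintro rfl; exact hx hzgt
      have hadj : G.Adj x z := (SimpleGraph.mem_neighborFinset G x z).mp (by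
        rcases Finset.mem_insert.mp hz with h | h
        · exact absurd h hzx
        · exact h)
      exact ⟨z, hadj, by simp [hx, hzgt]⟩
  · rintro ⟨y, hadj, hne⟩
    have hyx : y ∈ insert x (G.neighborFinset x) :=
      Finset.mem_insert_of_mem ((SimpleGraph.mem_neighborFinset G x y).mpr hadj)
    have hxx : x ∈ insert x (G.neighborFinset x) := Finset.mem_insert_self _ _
    have hbx : binf G F x ^ 2 ≤ F x ^ 2 := by
      rw [← sq_inf G F hF x]; exact Finset.inf'_le (fun z => F z ^ 2) hxx
    have hby : binf G F x ^ 2 ≤ F y ^ 2 := by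
      rw [← sq_inf G F hF x]; exact Finset.inf'_le (fun z => F z ^ 2) hyx
    have hBx : F x ^ 2 ≤ Bsup G F x ^ 2 := by
      rw [← sq_sup G F hF x]; exact Finset.le_sup' (fun z => F z ^ 2) hxx
    have hBy : F y ^ 2 ≤ Bsup G F x ^ 2 := by
      rw [← sq_sup G F hF x]; exact Finset.le_sup' (fun z => F z ^ 2) hyx
    by_cases hx : t < F x ^ 2
    · have hy : ¬ t < F y ^ 2 := fun h => hne (iff_of_true hx h)
      exact ⟨le_trans hby (not_lt.mp hy), lt_of_lt_of_le hx hBx⟩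
    · have hy : t < F y ^ 2 := by
        by_contra h
        exact hne (iff_of_false hx h)
      exact ⟨le_trans hbx (not_lt.mp hx), lt_of_lt_of_le hy hBy⟩

lemma intN (F : V → ℝ) :
    ∫ t in Set.Ioi (0:ℝ),
        (∑ x, (Set.Ioo (0:ℝ) (F x ^ 2)).indicator (fun _ => (1:ℝ)) t) = ∑ x, F x ^ 2 := by
  rw [MeasureTheory.integral_finset_sum univ (fun x _ =>
    ((integrable_ind measurableSet_Ioo (by rw [Real.volume_Ioo]; exact ENNReal.ofReal_lt_top)) :
      Integrable _ volume).integrableOn)]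
  exact Finset.sum_congr rfl (fun x _ => int_Ioo (F x ^ 2) (sq_nonneg _))

lemma intD (F : V → ℝ) (hF : ∀ v, 0 ≤ F v) :
    ∫ t in Set.Ioi (0:ℝ),
        (∑ x, (Set.Ico (binf G F x ^ 2) (Bsup G F x ^ 2)).indicator (fun _ => (1:ℝ)) t)
      = ∑ x, (Bsup G F x ^ 2 - binf G F x ^ 2) := by
  rw [MeasureTheory.integral_finset_sum univ (fun x _ =>
    ((integrable_ind measurableSet_Ico (by rw [Real.volume_Ico]; exact ENNReal.ofReal_lt_top)) :
      Integrable _ volume).integrableOn)]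
  refine Finset.sum_congr rfl (fun x _ => int_Ico _ _ (sq_nonneg _) ?_)
  have h1 : binf G F x ≤ Bsup G F x := le_trans (binf_le G F x) (le_Bsup G F x)
  exact pow_le_pow_left₀ (binf_nonneg G F hF x) h1 2

end MultiwayAux

open MultiwayAux

theorem rayleigh_vertex_cheeger {V : Type*} [Fintype V] [DecidableEq V]
    (G : SimpleGraph V) [DecidableRel G.Adj] (f : V → ℝ) (hf : f ≠ 0) :
    ∃ S : Set V, S.Nonempty ∧ S ⊆ Function.support f ∧
      4 * ((∑ e ∈ G.edgeFinset,
              Sym2.lift ⟨fun u v => |f u - f v| ^ 2, fun a b => by simp only []; rw [abs_sub_comm]⟩ e) /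
            (∑ v, |f v| ^ 2))
        ≥ (Real.sqrt (((vertBdry G S).ncard : ℝ) / ((S.ncard : ℝ)) + 1) - 1) ^ 2 := by
  classical
  obtain ⟨v₀, hv₀⟩ := Function.ne_iff.mp hf
  set Sig : ℝ := ∑ v, |f v| ^ 2 with hSig
  set F : V → ℝ := fun v => |f v| with hFdef
  have hF : ∀ v, 0 ≤ F v := fun v => abs_nonneg _
  have hSigF : Sig = ∑ v, F v ^ 2 := rfl
  have hSigpos : 0 < Sig :=
    Finset.sum_pos' (fun i _ => by positivity) ⟨v₀, Finset.mem_univ v₀, pow_pos (abs_pos.mpr hv₀) 2⟩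
  set E : ℝ := ∑ e ∈ G.edgeFinset, sqDiff F e with hE
  have hEnn : 0 ≤ E := Finset.sum_nonneg fun e _ => sqDiff_nonneg F e
  -- the candidate level sets and the minimizing one
  set supF : Finset V := Finset.univ.filter (fun v => f v ≠ 0) with hsupF
  have hsupne : supF.Nonempty := ⟨v₀, Finset.mem_filter.mpr ⟨Finset.mem_univ _, hv₀⟩⟩
  set C : V → Finset V := fun w => Finset.univ.filter (fun x => F w ^ 2 ≤ F x ^ 2) with hC
  set dB : Finset V → Finset V :=
    fun s => Finset.univ.filter (fun x => ∃ y, G.Adj x y ∧ ¬ (x ∈ s ↔ y ∈ s)) with hdB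
  set ρ : V → ℝ := fun w => ((dB (C w)).card : ℝ) / ((C w).card : ℝ) with hρ
  obtain ⟨w₀, hw₀s, hw₀min⟩ := Finset.exists_min_image supF ρ hsupne
  have hCw : ∀ w, w ∈ C w := fun w => Finset.mem_filter.mpr ⟨Finset.mem_univ _, le_refl _⟩
  have hCpos : ∀ w, 0 < ((C w).card : ℝ) := fun w => by
    exact_mod_cast Finset.card_pos.mpr ⟨w, hCw w⟩
  have hrnn : 0 ≤ ρ w₀ := div_nonneg (Nat.cast_nonneg _) (Nat.cast_nonneg _)
  -- pointwise comparison of the two counting functions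
  have hpt : ∀ t ∈ Set.Ioi (0:ℝ),
      ρ w₀ * (∑ x, (Set.Ioo (0:ℝ) (F x ^ 2)).indicator (fun _ => (1:ℝ)) t)
        ≤ ∑ x, (Set.Ico (binf G F x ^ 2) (Bsup G F x ^ 2)).indicator (fun _ => (1:ℝ)) t := by
    intro t ht
    rw [Set.mem_Ioi] at ht
    have hNeq : (∑ x, (Set.Ioo (0:ℝ) (F x ^ 2)).indicator (fun _ => (1:ℝ)) t)
        = ((Finset.univ.filter (fun x => t < F x ^ 2)).card : ℝ) := by
      rw [Finset.card_filter]
      push_cast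
      refine Finset.sum_congr rfl fun x _ => ?_
      by_cases hx : t < F x ^ 2
      · rw [Set.indicator_of_mem (Set.mem_Ioo.mpr ⟨ht, hx⟩), if_pos hx]
      · rw [Set.indicator_of_notMem (fun hmem => hx (Set.mem_Ioo.mp hmem).2), if_neg hx]
    have hDeq : (∑ x, (Set.Ico (binf G F x ^ 2) (Bsup G F x ^ 2)).indicator (fun _ => (1:ℝ)) t)
        = ((Finset.univ.filter
            (fun x => binf G F x ^ 2 ≤ t ∧ t < Bsup G F x ^ 2)).card : ℝ) := by
      rw [Finset.card_filter]
      push_cast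
      refine Finset.sum_congr rfl fun x _ => ?_
      by_cases hx : binf G F x ^ 2 ≤ t ∧ t < Bsup G F x ^ 2
      · rw [Set.indicator_of_mem (Set.mem_Ico.mpr hx), if_pos hx]
      · rw [Set.indicator_of_notMem (fun hmem => hx (Set.mem_Ico.mp hmem)), if_neg hx]
    rw [hNeq, hDeq]
    by_cases hS : (Finset.univ.filter (fun x => t < F x ^ 2)).Nonempty
    · obtain ⟨w, hw, hwmin⟩ := Finset.exists_min_image _ (fun x => F x ^ 2) hS
      have hwgt : t < F w ^ 2 := (Finset.mem_filter.mp hw).2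
      have hCweq : Finset.univ.filter (fun x => t < F x ^ 2) = C w := by
        ext x
        simp only [hC, Finset.mem_filter, Finset.mem_univ, true_and]
        constructor
        · intro hx
          exact hwmin x (Finset.mem_filter.mpr ⟨Finset.mem_univ _, hx⟩)
        · intro hx
          exact lt_of_lt_of_le hwgt hx
      have hwsup : w ∈ supF := by
        refine Finset.mem_filter.mpr ⟨Finset.mem_univ _, fun h0 => ?_⟩
        have : F w = 0 := by rw [hFdef]; simp [h0]
        rw [this] at hwgt
        norm_num at hwgt
        linarith
      have hmemC : ∀ z, z ∈ C w ↔ t < F z ^ 2 := by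
        intro z
        rw [← hCweq]
        simp
      have hDset : Finset.univ.filter (fun x => binf G F x ^ 2 ≤ t ∧ t < Bsup G F x ^ 2)
          = dB (C w) := by
        ext x
        simp only [hdB, Finset.mem_filter, Finset.mem_univ, true_and]
        rw [mem_interval_iff G F hF x t]
        simp only [hmemC]
      rw [hCweq, hDset]
      have hle : ρ w₀ ≤ ρ w := hw₀min w hwsup
      have hcancel : ρ w * ((C w).card : ℝ) = ((dB (C w)).card : ℝ) := by
        rw [hρ]
        field_simp
      calc ρ w₀ * ((C w).card : ℝ) ≤ ρ w * ((C w).card : ℝ) :=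
            mul_le_mul_of_nonneg_right hle (le_of_lt (hCpos w))
        _ = ((dB (C w)).card : ℝ) := hcancel
    · rw [Finset.not_nonempty_iff_eq_empty.mp hS]
      simp
  -- integrate the pointwise inequality
  have hNint : Integrable
      (fun t => ∑ x, (Set.Ioo (0:ℝ) (F x ^ 2)).indicator (fun _ => (1:ℝ)) t)
      (volume.restrict (Set.Ioi 0)) := by
    apply integrable_finset_sum
    intro i _
    exact (integrable_ind measurableSet_Ioo
      (by rw [Real.volume_Ioo]; exact ENNReal.ofReal_lt_top)).integrableOn
  have hDint : Integrable
      (fun t => ∑ x, (Set.Ico (binf G F x ^ 2) (Bsup G F x ^ 2)).indicator (fun _ => (1:ℝ)) t)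
      (volume.restrict (Set.Ioi 0)) := by
    apply integrable_finset_sum
    intro i _
    exact (integrable_ind measurableSet_Ico
      (by rw [Real.volume_Ico]; exact ENNReal.ofReal_lt_top)).integrableOn
  have hint := MeasureTheory.setIntegral_mono_on (hNint.const_mul (ρ w₀)) hDint
    measurableSet_Ioi hpt
  rw [MeasureTheory.integral_const_mul, intN F, intD G F hF] at hint
  -- combine with the core estimate
  have hcore := core G F hF
  rw [← hE] at hcore
  have hmain : ρ w₀ * Sig ≤ 4 * Real.sqrt (Sig * E) + E := by
    rw [hSigF]
    calc ρ w₀ * (∑ v, F v ^ 2) ≤ ∑ x, (Bsup G F x ^ 2 - binf G F x ^ 2) := hint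
      _ ≤ 4 * Real.sqrt ((∑ v, F v ^ 2) * E) + E := by
          have := hcore
          rw [← hSigF] at this ⊢
          exact this
  -- the witness set
  refine ⟨(↑(C w₀) : Set V), ⟨w₀, Finset.mem_coe.mpr (hCw w₀)⟩, ?_, ?_⟩
  · intro x hx
    have hx' : F w₀ ^ 2 ≤ F x ^ 2 := (Finset.mem_filter.mp (Finset.mem_coe.mp hx)).2
    have hw₀ne : f w₀ ≠ 0 := (Finset.mem_filter.mp hw₀s).2
    have hpos : 0 < F x ^ 2 := lt_of_lt_of_le (pow_pos (abs_pos.mpr hw₀ne) 2) hx'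
    intro h0
    rw [show F x = 0 from by rw [hFdef]; simp [h0]] at hpos
    norm_num at hpos
  · -- the quantitative bound
    have hkey : (∑ e ∈ G.edgeFinset,
        Sym2.lift ⟨fun u v => |f u - f v| ^ 2,
          fun a b => by simp only []; rw [abs_sub_comm]⟩ e)
        = ∑ e ∈ G.edgeFinset, sqDiff f e := by
      refine Finset.sum_congr rfl fun e _ => ?_
      induction e using Sym2.ind with
      | _ u v =>
        rw [Sym2.lift_mk, sqDiff_mk]
        show |f u - f v| ^ 2 = (f u - f v) ^ 2
        rw [sq_abs]
    rw [hkey]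
    have hvb : vertBdry G (↑(C w₀) : Set V) = ↑(dB (C w₀)) := by
      ext x
      simp only [vertBdry, Set.mem_setOf_eq, hdB, Finset.coe_filter, Finset.mem_univ, true_and,
        Finset.mem_coe, Finset.mem_filter]
    rw [hvb, Set.ncard_coe_finset, Set.ncard_coe_finset]
    have hρeq : ((dB (C w₀)).card : ℝ) / ((C w₀).card : ℝ) = ρ w₀ := rfl
    rw [hρeq]
    -- final arithmetic
    set Ef : ℝ := ∑ e ∈ G.edgeFinset, sqDiff f e with hEf
    have hEEf : E ≤ Ef := by
      refine Finset.sum_le_sum fun e he => ?_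
      induction e using Sym2.ind with
      | _ u v =>
        rw [sqDiff_mk, sqDiff_mk]
        have h := abs_abs_sub_abs_le_abs_sub (f u) (f v)
        calc (F u - F v) ^ 2 = (abs (|f u| - |f v|)) ^ 2 := by rw [sq_abs]
          _ ≤ |f u - f v| ^ 2 := pow_le_pow_left₀ (abs_nonneg _) h 2
          _ = (f u - f v) ^ 2 := sq_abs _
    have hEfnn : 0 ≤ Ef := le_trans hEnn hEEf
    set s : ℝ := Real.sqrt (Ef / Sig) with hs
    have hsnn : 0 ≤ s := Real.sqrt_nonneg _
    have hs2 : s ^ 2 = Ef / Sig := Real.sq_sqrt (div_nonneg hEfnn hSigpos.le)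
    have hsqrtSE : Real.sqrt (Sig * E) ≤ Sig * s := by
      have h1 : Real.sqrt (Sig * E) ≤ Real.sqrt (Sig * Ef) :=
        Real.sqrt_le_sqrt (mul_le_mul_of_nonneg_left hEEf hSigpos.le)
      have h2 : Real.sqrt (Sig * Ef) = Sig * s := by
        rw [show Sig * Ef = Sig ^ 2 * (Ef / Sig) by field_simp,
          Real.sqrt_mul (sq_nonneg Sig), Real.sqrt_sq hSigpos.le, hs]
      linarith
    have hEfSig : Ef = Sig * s ^ 2 := by
      rw [hs2]
      field_simp
    have h2 : ρ w₀ ≤ 4 * s + s ^ 2 := by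
      have h3 : ρ w₀ * Sig ≤ (4 * s + s ^ 2) * Sig := by
        calc ρ w₀ * Sig ≤ 4 * Real.sqrt (Sig * E) + E := hmain
          _ ≤ 4 * (Sig * s) + Sig * s ^ 2 := by
              rw [← hEfSig]
              nlinarith [hsqrtSE, hEEf]
          _ = (4 * s + s ^ 2) * Sig := by ring
      exact le_of_mul_le_mul_right h3 hSigpos
    have h3 : Real.sqrt (ρ w₀ + 1) ≤ 2 * s + 1 := by
      have h4 : ρ w₀ + 1 ≤ (2 * s + 1) ^ 2 := by nlinarith [h2, sq_nonneg s]
      calc Real.sqrt (ρ w₀ + 1) ≤ Real.sqrt ((2 * s + 1) ^ 2) := Real.sqrt_le_sqrt h4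
        _ = 2 * s + 1 := Real.sqrt_sq (by linarith)
    have h4 : 1 ≤ Real.sqrt (ρ w₀ + 1) := by
      have h5 : Real.sqrt 1 ≤ Real.sqrt (ρ w₀ + 1) := Real.sqrt_le_sqrt (by linarith [hrnn])
      rwa [Real.sqrt_one] at h5
    rw [ge_iff_le]
    calc (Real.sqrt (ρ w₀ + 1) - 1) ^ 2 ≤ (2 * s) ^ 2 :=
          pow_le_pow_left₀ (by linarith) (by linarith) 2
      _ = 4 * (Ef / Sig) := by rw [mul_pow, hs2]; norm_num

end Multiway
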